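/- Let $G$ be a finite abelian group. Two elements $a, b \in G$ generate the same cyclic subgroup of $G$ if and only if there exists an automorphism $f$ of $G$ satisfying $f(H) = H$ for every subgroup $H \le G$ (a power automorphism) such that $f(a) = b$. -/

import Mathlib

/-- In a finite abelian group, two elements generate the same cyclic subgroup iff some
power automorphism (an automorphism fixing every subgroup setwise) maps one to the other. -/
theorem stmt5 (G : Type*) [CommGroup G] [Finite G] (a b : G) :
    Subgroup.zpowers a = Subgroup.zpowers b ↔
      ∃ f : G ≃* G, (∀ H : Subgroup G, H.map f.toMonoidHom = H) ∧ f a = b := by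
  constructor
  · intro h
    have hb : b ∈ Subgroup.zpowers a := h ▸ Subgroup.mem_zpowers b
    rw [← mem_powers_iff_mem_zpowers] at hb
    obtain ⟨k, hk'⟩ := hb
    have hk : a ^ k = b := hk'
    have hord : orderOf a = orderOf b := by
      rw [← Nat.card_zpowers, ← Nat.card_zpowers, h]
    set d := orderOf a with hd
    have hdpos : 0 < d := orderOf_pos a
    have hcop : Nat.Coprime k d := by
      have h1 : orderOf (a ^ k) = d := by rw [hk, ← hord]
      rw [orderOf_pow] at h1
      rcases Nat.div_eq_self.mp h1 with h2 | h2
      · omega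
      · exact Nat.coprime_comm.mp h2
    set n := Nat.card G with hn
    haveI : NeZero n := ⟨Nat.card_pos.ne'⟩
    have hdn : d ∣ n := orderOf_dvd_natCard a
    obtain ⟨u, hu⟩ := ZMod.unitsMap_surjective hdn (ZMod.unitOfCoprime k hcop)
    set m := (u : ZMod n).val with hm
    have hm_cop : Nat.Coprime m n := ZMod.val_coe_unit_coprime u
    have hmk : (m : ZMod d) = (k : ZMod d) := by
      have h1 : ((ZMod.unitsMap hdn u : (ZMod d)ˣ) : ZMod d) = (k : ZMod d) := by
        rw [hu, ZMod.coe_unitOfCoprime]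
      rw [ZMod.unitsMap_def] at h1
      rw [hm, ZMod.natCast_val]
      simpa [ZMod.castHom_apply] using h1
    have hab : a ^ m = b := by
      rw [← hk, pow_eq_pow_iff_modEq]
      exact (ZMod.natCast_eq_natCast_iff _ _ _).mp hmk
    have hinj : Function.Injective fun x : G => x ^ m := by
      intro x y hxy
      have h1 : (x / y) ^ m = 1 := by
        simp only at hxy
        rw [div_pow, hxy, div_self']
      have h2 : orderOf (x / y) ∣ m := orderOf_dvd_of_pow_eq_one h1
      have h3 : orderOf (x / y) ∣ n := orderOf_dvd_natCard _
      have h4 : orderOf (x / y) ∣ 1 := hm_cop ▸ Nat.dvd_gcd h2 h3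
      have h5 : x / y = 1 := orderOf_eq_one_iff.mp (Nat.eq_one_of_dvd_one h4)
      exact div_eq_one.mp h5
    have hsurj : ∀ x : G, ∃ c : ℕ, (x ^ c) ^ m = x := by
      intro x
      have hcop' : Nat.Coprime m (orderOf x) :=
        Nat.Coprime.coprime_dvd_right (orderOf_dvd_natCard x) hm_cop
      rcases Nat.lt_or_ge (orderOf x) 2 with hlt | hge
      · have hx1 : orderOf x = 1 := by have := orderOf_pos x; omega
        refine ⟨0, ?_⟩
        rw [pow_zero, one_pow, ← pow_one x, ← hx1, pow_orderOf_eq_one]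
      · obtain ⟨c, -, hc⟩ := Nat.exists_mul_mod_eq_one_of_coprime hcop' hge
        refine ⟨c, ?_⟩
        rw [← pow_mul]
        nth_rewrite 2 [← pow_one x]
        rw [pow_eq_pow_iff_modEq]
        show c * m % orderOf x = 1 % orderOf x
        rw [Nat.one_mod_eq_one.mpr (by omega), Nat.mul_comm, hc]
    have hbij : Function.Bijective (powMonoidHom m : G →* G) := by
      constructor
      · exact hinj
      · intro y
        obtain ⟨c, hc⟩ := hsurj y
        exact ⟨y ^ c, hc⟩
    refine ⟨MulEquiv.ofBijective (powMonoidHom m) hbij, ?_, ?_⟩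
    · intro H
      apply le_antisymm
      · rintro _ ⟨x, hx, rfl⟩
        exact H.pow_mem hx m
      · intro x hx
        obtain ⟨c, hc⟩ := hsurj x
        exact ⟨x ^ c, H.pow_mem hx c, hc⟩
    · show a ^ m = b
      exact hab
  · rintro ⟨f, hH, rfl⟩
    calc Subgroup.zpowers a = (Subgroup.zpowers a).map f.toMonoidHom := (hH _).symm
      _ = Subgroup.zpowers (f a) := f.toMonoidHom.map_zpowers a
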